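/- Let A and B be 4×4 real symmetric matrices defining ellipsoids, i.e., for M ∈ {A, B} the upper-left 3×3 block of M is positive definite and det M < 0; for such M let E_M = {x ∈ ℝ³ : (x,1)·M·(x,1)ᵀ ≤ 0} be the associated solid ellipsoid. Let f(λ) = det(λ·A + B). Then E_A and E_B are disjoint (the ellipsoids are separated) if and only if f has two distinct positive real roots, i.e., there exist λ₁, λ₂ with 0 < λ₁ < λ₂, f(λ₁) = 0 and f(λ₂) = 0. -/

import Mathlib

/-- A 4×4 real symmetric matrix defines an ellipsoid when its upper-left 3×3 block is
positive definite and its determinant is negative. -/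
def IsEllipsoidMatrix (M : Matrix (Fin 4) (Fin 4) ℝ) : Prop :=
  M.IsSymm ∧ (Matrix.of fun i j : Fin 3 => M i.castSucc j.castSucc).PosDef ∧ M.det < 0

/-- The quadratic form `(x,1) · M · (x,1)ᵀ` associated to a 4×4 matrix `M`. -/
def ellipsoidQuadForm (M : Matrix (Fin 4) (Fin 4) ℝ) (x : Fin 3 → ℝ) : ℝ :=
  dotProduct ![x 0, x 1, x 2, 1] (M.mulVec ![x 0, x 1, x 2, 1])

/-- The characteristic polynomial `f(λ) = det (λ A + B)` of the pencil of `A` and `B`. -/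
noncomputable def pencilPoly (A B : Matrix (Fin 4) (Fin 4) ℝ) : Polynomial ℝ :=
  (Matrix.of fun i j =>
    Polynomial.C (A i j) * Polynomial.X + Polynomial.C (B i j)).det

namespace EllSep
open Matrix

def blk (M : Matrix (Fin 4) (Fin 4) ℝ) : Matrix (Fin 3) (Fin 3) ℝ :=
  Matrix.of fun i j : Fin 3 => M i.castSucc j.castSucc
def vec (M : Matrix (Fin 4) (Fin 4) ℝ) : Fin 3 → ℝ := fun i => M i.castSucc 3
def cst (M : Matrix (Fin 4) (Fin 4) ℝ) : ℝ := M 3 3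

lemma expand (M : Matrix (Fin 4) (Fin 4) ℝ) (hM : M.IsSymm) (x : Fin 3 → ℝ) :
    ellipsoidQuadForm M x = x ⬝ᵥ (blk M *ᵥ x) + 2 * (vec M ⬝ᵥ x) + cst M := by
  have h30 : M 3 0 = M 0 3 := hM.apply 0 3
  have h31 : M 3 1 = M 1 3 := hM.apply 1 3
  have h32 : M 3 2 = M 2 3 := hM.apply 2 3
  have c0 : (Fin.castSucc (0:Fin 3)) = (0:Fin 4) := rfl
  have c1 : (Fin.castSucc (1:Fin 3)) = (1:Fin 4) := rfl
  have c2 : (Fin.castSucc (2:Fin 3)) = (2:Fin 4) := rfl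
  simp [ellipsoidQuadForm, blk, vec, cst, dotProduct, Matrix.mulVec,
    Fin.sum_univ_four, Fin.sum_univ_three, c0, c1, c2, h30, h31, h32]
  ring

end EllSep

namespace EllSep
open Matrix

noncomputable def cen (M : Matrix (Fin 4) (Fin 4) ℝ) : Fin 3 → ℝ := -((blk M)⁻¹ *ᵥ vec M)
noncomputable def schur (M : Matrix (Fin 4) (Fin 4) ℝ) : ℝ :=
  cst M - vec M ⬝ᵥ ((blk M)⁻¹ *ᵥ vec M)

lemma dot_mulVec_symm {P : Matrix (Fin 3) (Fin 3) ℝ} (h : P.IsSymm) (a b : Fin 3 → ℝ) :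
    a ⬝ᵥ (P *ᵥ b) = b ⬝ᵥ (P *ᵥ a) := by
  rw [Matrix.dotProduct_mulVec, ← Matrix.mulVec_transpose, h.eq, dotProduct_comm]

lemma blk_isSymm {M : Matrix (Fin 4) (Fin 4) ℝ} (hM : M.IsSymm) : (blk M).IsSymm := by
  ext i j; exact hM.apply _ _

lemma mulVec_cen {M : Matrix (Fin 4) (Fin 4) ℝ} (hP : (blk M).PosDef) :
    blk M *ᵥ cen M = -vec M := by
  have hd : IsUnit (blk M).det := hP.det_pos.ne'.isUnit
  rw [cen, Matrix.mulVec_neg, Matrix.mulVec_mulVec, Matrix.mul_nonsing_inv _ hd,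
    Matrix.one_mulVec]

lemma completeSquare {M : Matrix (Fin 4) (Fin 4) ℝ} (hM : M.IsSymm) (hP : (blk M).PosDef)
    (x : Fin 3 → ℝ) :
    ellipsoidQuadForm M x = (x - cen M) ⬝ᵥ (blk M *ᵥ (x - cen M)) + schur M := by
  have hsym := blk_isSymm hM
  have h1 : blk M *ᵥ cen M = -vec M := mulVec_cen hP
  have h2 : cen M ⬝ᵥ (blk M *ᵥ x) = x ⬝ᵥ (blk M *ᵥ cen M) := dot_mulVec_symm hsym _ _
  rw [expand M hM x]
  rw [Matrix.mulVec_sub, dotProduct_sub, sub_dotProduct,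
    sub_dotProduct, h2, h1, schur, cen]
  simp only [dotProduct_neg, neg_dotProduct, dotProduct_comm x (vec M)]
  have h3 : (blk M)⁻¹ *ᵥ vec M ⬝ᵥ vec M = vec M ⬝ᵥ (blk M)⁻¹ *ᵥ vec M :=
    dotProduct_comm _ _
  rw [h3]; ring

lemma schur_le {M : Matrix (Fin 4) (Fin 4) ℝ} (hM : M.IsSymm) (hP : (blk M).PosDef)
    (x : Fin 3 → ℝ) : schur M ≤ ellipsoidQuadForm M x := by
  rw [completeSquare hM hP x]
  have := hP.posSemidef.dotProduct_mulVec_nonneg (x - cen M)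
  simp only [star_trivial] at this
  linarith

lemma eq_cen_of_quadForm_eq_schur {M : Matrix (Fin 4) (Fin 4) ℝ} (hM : M.IsSymm)
    (hP : (blk M).PosDef) {x : Fin 3 → ℝ}
    (h : ellipsoidQuadForm M x = schur M) : x = cen M := by
  by_contra hne
  have hx : x - cen M ≠ 0 := sub_ne_zero.mpr hne
  have := hP.dotProduct_mulVec_pos hx
  simp only [star_trivial] at this
  rw [completeSquare hM hP x] at h
  linarith

end EllSep

namespace EllSep
open Matrix

lemma fsf_inl (i : Fin 3) : finSumFinEquiv (Sum.inl i : Fin 3 ⊕ Fin 1) = i.castSucc := rfl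
lemma fsf_inr (j : Fin 1) : finSumFinEquiv (Sum.inr j : Fin 3 ⊕ Fin 1) = (3 : Fin 4) := by
  have : j = 0 := Subsingleton.elim _ _
  subst this; rfl

set_option maxHeartbeats 1600000 in
lemma det_eq_blk_mul_schur {M : Matrix (Fin 4) (Fin 4) ℝ} (hM : M.IsSymm)
    (hP : (blk M).PosDef) : M.det = (blk M).det * schur M := by
  have hd : IsUnit (blk M).det := hP.det_pos.ne'.isUnit
  haveI : Invertible (blk M) := (blk M).invertibleOfIsUnitDet hd
  have hsub : M.submatrix (⇑(finSumFinEquiv : Fin 3 ⊕ Fin 1 ≃ Fin 4))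
        (⇑(finSumFinEquiv : Fin 3 ⊕ Fin 1 ≃ Fin 4))
      = Matrix.fromBlocks (blk M) (Matrix.of fun i (_ : Fin 1) => vec M i)
        (Matrix.of fun (_ : Fin 1) j => vec M j) (Matrix.of fun (_ _ : Fin 1) => cst M) := by
    ext i j
    cases i with
    | inl i =>
      cases j with
      | inl j =>
        simp only [Matrix.submatrix_apply, Matrix.fromBlocks_apply₁₁, fsf_inl, blk,
          Matrix.of_apply]
      | inr j =>
        simp only [Matrix.submatrix_apply, Matrix.fromBlocks_apply₁₂, fsf_inl, fsf_inr, vec,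
          Matrix.of_apply]
    | inr i =>
      cases j with
      | inl j =>
        simp only [Matrix.submatrix_apply, Matrix.fromBlocks_apply₂₁, fsf_inl, fsf_inr, vec,
          Matrix.of_apply]
        exact hM.apply _ _
      | inr j =>
        simp only [Matrix.submatrix_apply, Matrix.fromBlocks_apply₂₂, fsf_inr, cst,
          Matrix.of_apply]
  have hdet : M.det = (M.submatrix (⇑(finSumFinEquiv : Fin 3 ⊕ Fin 1 ≃ Fin 4))
      (⇑(finSumFinEquiv : Fin 3 ⊕ Fin 1 ≃ Fin 4))).det :=
    (Matrix.det_submatrix_equiv_self (finSumFinEquiv : Fin 3 ⊕ Fin 1 ≃ Fin 4) M).symm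
  rw [hdet, hsub, Matrix.det_fromBlocks₁₁]
  congr 1
  rw [Matrix.det_fin_one]
  rw [Matrix.invOf_eq_nonsing_inv]
  simp only [Matrix.sub_apply, Matrix.of_apply, Matrix.mul_apply, schur, dotProduct,
    Matrix.mulVec, Fin.sum_univ_three]
  ring

end EllSep

namespace EllSep
open Matrix

lemma quadForm_combo (a b : ℝ) (A B : Matrix (Fin 4) (Fin 4) ℝ) (x : Fin 3 → ℝ) :
    ellipsoidQuadForm (a • A + b • B) x
      = a * ellipsoidQuadForm A x + b * ellipsoidQuadForm B x := by
  simp only [ellipsoidQuadForm, Matrix.add_mulVec, Matrix.smul_mulVec,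
    dotProduct_add, dotProduct_smul, smul_eq_mul]

lemma blk_combo (a b : ℝ) (A B : Matrix (Fin 4) (Fin 4) ℝ) :
    blk (a • A + b • B) = a • blk A + b • blk B := by
  ext i j; simp [blk]

lemma vec_combo (a b : ℝ) (A B : Matrix (Fin 4) (Fin 4) ℝ) :
    vec (a • A + b • B) = a • vec A + b • vec B := by
  ext i; simp [vec]

lemma posDef_combo {P Q : Matrix (Fin 3) (Fin 3) ℝ} (hP : P.PosDef) (hQ : Q.PosDef)
    {a b : ℝ} (ha : 0 ≤ a) (hb : 0 ≤ b) (hab : 0 < a + b) : (a • P + b • Q).PosDef := by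
  have hPs : P.IsSymm := by
    rw [Matrix.IsSymm, ← Matrix.conjTranspose_eq_transpose_of_trivial]; exact hP.1
  have hQs : Q.IsSymm := by
    rw [Matrix.IsSymm, ← Matrix.conjTranspose_eq_transpose_of_trivial]; exact hQ.1
  refine Matrix.PosDef.of_dotProduct_mulVec_pos ?_ (fun x hx => ?_)
  · rw [Matrix.IsHermitian, Matrix.conjTranspose_eq_transpose_of_trivial]
    exact ((hPs.smul a).add (hQs.smul b)).eq
  · have h1 := hP.dotProduct_mulVec_pos hx
    have h2 := hQ.dotProduct_mulVec_pos hx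
    simp only [star_trivial] at h1 h2 ⊢
    rw [Matrix.add_mulVec, Matrix.smul_mulVec, Matrix.smul_mulVec,
      dotProduct_add, dotProduct_smul, dotProduct_smul, smul_eq_mul,
      smul_eq_mul]
    rcases lt_or_eq_of_le ha with ha' | ha'
    · nlinarith
    · have hb' : 0 < b := by rw [← ha'] at hab; simpa using hab
      nlinarith

lemma schur_neg_of_ellipsoid {M : Matrix (Fin 4) (Fin 4) ℝ} (hM : IsEllipsoidMatrix M) :
    schur M < 0 := by
  obtain ⟨hs, hp, hd⟩ := hM
  have h := det_eq_blk_mul_schur hs hp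
  have hpos : 0 < (blk M).det := hp.det_pos
  nlinarith

lemma schur_eq_quad_cen {M : Matrix (Fin 4) (Fin 4) ℝ} (hM : M.IsSymm)
    (hP : (blk M).PosDef) : ellipsoidQuadForm M (cen M) = schur M := by
  rw [completeSquare hM hP]
  simp

end EllSep

namespace EllSep
open Matrix

lemma pencil_eval (A B : Matrix (Fin 4) (Fin 4) ℝ) (t : ℝ) :
    (pencilPoly A B).eval t = (t • A + B).det := by
  unfold pencilPoly
  rw [← Polynomial.coe_evalRingHom, RingHom.map_det]
  congr 1
  ext i j
  simp only [RingHom.mapMatrix_apply, Matrix.map_apply, Matrix.of_apply, Polynomial.coe_evalRingHom,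
    Polynomial.eval_add, Polynomial.eval_mul, Polynomial.eval_C, Polynomial.eval_X,
    Matrix.add_apply, Matrix.smul_apply, smul_eq_mul]
  ring

lemma schur_rw (M : Matrix (Fin 4) (Fin 4) ℝ) :
    schur M = cst M - ((blk M).det)⁻¹ * (vec M ⬝ᵥ ((blk M).adjugate *ᵥ vec M)) := by
  rw [schur, Matrix.inv_def, Ring.inverse_eq_inv, Matrix.smul_mulVec,
    dotProduct_smul, smul_eq_mul]

lemma cen_rw (M : Matrix (Fin 4) (Fin 4) ℝ) :
    cen M = -(((blk M).det)⁻¹ • ((blk M).adjugate *ᵥ vec M)) := by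
  rw [cen, Matrix.inv_def, Ring.inverse_eq_inv, Matrix.smul_mulVec]

lemma quadForm_continuous (M : Matrix (Fin 4) (Fin 4) ℝ) :
    Continuous fun x : Fin 3 → ℝ => ellipsoidQuadForm M x := by
  unfold ellipsoidQuadForm
  have hv : Continuous fun x : Fin 3 → ℝ => (![x 0, x 1, x 2, 1] : Fin 4 → ℝ) := by
    refine continuous_pi fun i => ?_
    fin_cases i <;> simp <;> first
      | exact continuous_apply _
      | exact continuous_const
  exact hv.dotProduct (continuous_const.matrix_mulVec hv)

end EllSep

namespace EllSep
open Matrix Set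

theorem main
    (A B : Matrix (Fin 4) (Fin 4) ℝ)
    (hA : IsEllipsoidMatrix A) (hB : IsEllipsoidMatrix B) :
    (¬ ∃ x : Fin 3 → ℝ, ellipsoidQuadForm A x ≤ 0 ∧ ellipsoidQuadForm B x ≤ 0) ↔
      ∃ lam₁ lam₂ : ℝ, 0 < lam₁ ∧ lam₁ < lam₂ ∧
        (pencilPoly A B).eval lam₁ = 0 ∧ (pencilPoly A B).eval lam₂ = 0 := by
  obtain ⟨hAs, hAp', hAd⟩ := hA
  obtain ⟨hBs, hBp', hBd⟩ := hB
  have hAp : (blk A).PosDef := hAp'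
  have hBp : (blk B).PosDef := hBp'
  have hsA : schur A < 0 := schur_neg_of_ellipsoid ⟨hAs, hAp', hAd⟩
  have hsB : schur B < 0 := schur_neg_of_ellipsoid ⟨hBs, hBp', hBd⟩
  set N : ℝ → Matrix (Fin 4) (Fin 4) ℝ := fun t => t • A + (1 - t) • B with hNdef
  have hN0 : N 0 = B := by simp [hNdef]
  have hN1 : N 1 = A := by simp [hNdef]
  have hNsymm : ∀ t : ℝ, (N t).IsSymm := fun t => (hAs.smul t).add (hBs.smul _)
  have hNblk : ∀ t : ℝ, blk (N t) = t • blk A + (1 - t) • blk B := fun t =>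
    blk_combo t (1 - t) A B
  have hNpos : ∀ t ∈ Icc (0:ℝ) 1, (blk (N t)).PosDef := by
    intro t ht
    rw [hNblk]
    exact posDef_combo hAp hBp ht.1 (by linarith [ht.2]) (by norm_num)
  -- continuity infrastructure
  have hblkc : Continuous fun t => blk (N t) := by
    simp only [hNblk]
    refine continuous_matrix fun i j => ?_
    simp only [Matrix.add_apply, Matrix.smul_apply, smul_eq_mul]
    fun_prop
  have hvecc : Continuous fun t => vec (N t) := by
    have : ∀ t : ℝ, vec (N t) = t • vec A + (1 - t) • vec B := fun t => vec_combo t (1-t) A B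
    simp only [this]
    refine continuous_pi fun i => ?_
    simp only [Pi.add_apply, Pi.smul_apply, smul_eq_mul]
    fun_prop
  have hcstc : Continuous fun t => cst (N t) := by
    simp only [cst, hNdef, Matrix.add_apply, Matrix.smul_apply, smul_eq_mul]
    fun_prop
  have hdetc : Continuous fun t => (blk (N t)).det := hblkc.matrix_det
  have hwc : Continuous fun t => (blk (N t)).adjugate *ᵥ vec (N t) :=
    hblkc.matrix_adjugate.matrix_mulVec hvecc
  have hdetne : ∀ t ∈ Icc (0:ℝ) 1, (blk (N t)).det ≠ 0 := fun t ht => (hNpos t ht).det_pos.ne'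
  have hschurc : ContinuousOn (fun t => schur (N t)) (Icc (0:ℝ) 1) := by
    simp only [schur_rw]
    exact hcstc.continuousOn.sub
      (((hdetc.continuousOn.inv₀ hdetne)).mul (hvecc.dotProduct hwc).continuousOn)
  have hcenc : ContinuousOn (fun t => cen (N t)) (Icc (0:ℝ) 1) := by
    simp only [cen_rw]
    exact ((hdetc.continuousOn.inv₀ hdetne).smul hwc.continuousOn).neg
  have hscen : ∀ t ∈ Icc (0:ℝ) 1, schur (N t)
      = t * ellipsoidQuadForm A (cen (N t)) + (1 - t) * ellipsoidQuadForm B (cen (N t)) := by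
    intro t ht
    rw [← schur_eq_quad_cen (hNsymm t) (hNpos t ht)]
    exact quadForm_combo t (1-t) A B _
  constructor
  · -- separated implies two roots
    intro h
    -- Step 1 : find t₀ in the open interval where schur (N t₀) > 0
    have step1 : ∃ t₀ ∈ Ioo (0:ℝ) 1, 0 < schur (N t₀) := by
      by_contra h0
      push_neg at h0
      have hall : ∀ t ∈ Icc (0:ℝ) 1, schur (N t) ≤ 0 := by
        intro t ht
        rcases eq_or_lt_of_le ht.1 with h1 | h1
        · rw [← h1, hN0]; exact hsB.le
        rcases eq_or_lt_of_le ht.2 with h2 | h2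
        · rw [h2, hN1]; exact hsA.le
        · exact h0 t ⟨h1, h2⟩
      set a : ℝ → ℝ := fun t => ellipsoidQuadForm A (cen (N t)) with hadef
      have hac : ContinuousOn a (Icc (0:ℝ) 1) :=
        (quadForm_continuous A).comp_continuousOn hcenc
      have ha0 : 0 < a 0 := by
        by_contra hle
        push_neg at hle
        refine h ⟨cen (N 0), hle, ?_⟩
        rw [hN0, schur_eq_quad_cen hBs hBp]
        exact hsB.le
      have ha1 : a 1 < 0 := by
        have : a 1 = schur A := by rw [hadef]; simp only; rw [hN1, schur_eq_quad_cen hAs hAp]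
        rw [this]; exact hsA
      have : (0:ℝ) ∈ Icc (a 1) (a 0) := ⟨ha1.le, ha0.le⟩
      obtain ⟨ts, hts, htsa⟩ := intermediate_value_Icc' (by norm_num : (0:ℝ) ≤ 1) hac this
      have hts1 : ts < 1 := by
        rcases eq_or_lt_of_le hts.2 with h1 | h1
        · exfalso; rw [h1] at htsa; rw [htsa] at ha1; exact lt_irrefl _ ha1
        · exact h1
      have htsa' : ellipsoidQuadForm A (cen (N ts)) = 0 := htsa
      have hcombo := hscen ts hts
      rw [htsa', mul_zero, zero_add] at hcombo
      have hle := hall ts hts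
      rw [hcombo] at hle
      have hBle : ellipsoidQuadForm B (cen (N ts)) ≤ 0 := by
        have h1t : 0 < 1 - ts := by linarith
        nlinarith
      exact h ⟨cen (N ts), htsa'.le, hBle⟩
    obtain ⟨t₀, ht₀, hst₀⟩ := step1
    -- Step 2 : IVT on both sides
    have hsub1 : Icc (0:ℝ) t₀ ⊆ Icc (0:ℝ) 1 := Icc_subset_Icc le_rfl ht₀.2.le
    have hsub2 : Icc t₀ (1:ℝ) ⊆ Icc (0:ℝ) 1 := Icc_subset_Icc ht₀.1.le le_rfl
    have hmem1 : (0:ℝ) ∈ Icc (schur (N 0)) (schur (N t₀)) := by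
      rw [hN0]; exact ⟨hsB.le, hst₀.le⟩
    obtain ⟨t₁, ht₁, hst₁'⟩ := intermediate_value_Icc ht₀.1.le (hschurc.mono hsub1) hmem1
    have hst₁ : schur (N t₁) = 0 := hst₁'
    have hmem2 : (0:ℝ) ∈ Icc (schur (N 1)) (schur (N t₀)) := by
      rw [hN1]; exact ⟨hsA.le, hst₀.le⟩
    obtain ⟨t₂, ht₂, hst₂'⟩ := intermediate_value_Icc' ht₀.2.le (hschurc.mono hsub2) hmem2
    have hst₂ : schur (N t₂) = 0 := hst₂'
    have ht₁0 : 0 < t₁ := by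
      rcases eq_or_lt_of_le ht₁.1 with h1 | h1
      · exfalso; rw [← h1, hN0] at hst₁; rw [hst₁] at hsB; exact lt_irrefl _ hsB
      · exact h1
    have ht₁t₀ : t₁ < t₀ := by
      rcases eq_or_lt_of_le ht₁.2 with h1 | h1
      · exfalso; rw [h1] at hst₁; rw [hst₁] at hst₀; exact lt_irrefl _ hst₀
      · exact h1
    have ht₂t₀ : t₀ < t₂ := by
      rcases eq_or_lt_of_le ht₂.1 with h1 | h1
      · exfalso; rw [← h1] at hst₂; rw [hst₂] at hst₀; exact lt_irrefl _ hst₀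
      · exact h1
    have ht₂1 : t₂ < 1 := by
      rcases eq_or_lt_of_le ht₂.2 with h1 | h1
      · exfalso; rw [h1, hN1] at hst₂; rw [hst₂] at hsA; exact lt_irrefl _ hsA
      · exact h1
    -- convert parameters
    have key : ∀ t : ℝ, 0 < t → t < 1 → t ∈ Icc (0:ℝ) 1 → schur (N t) = 0 →
        (pencilPoly A B).eval (t / (1 - t)) = 0 := by
      intro t ht0 ht1 htI hst
      have h1t : (0:ℝ) < 1 - t := by linarith
      rw [pencil_eval]
      have hNt : N t = (1 - t) • ((t / (1 - t)) • A + B) := by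
        rw [smul_add, smul_smul]
        have : (1 - t) * (t / (1 - t)) = t := by field_simp
        rw [this]
      have hdetN : (N t).det = 0 := by
        rw [det_eq_blk_mul_schur (hNsymm t) (hNpos t htI), hst, mul_zero]
      rw [hNt, Matrix.det_smul] at hdetN
      have hpow : (1 - t) ^ Fintype.card (Fin 4) ≠ 0 := pow_ne_zero _ h1t.ne'
      exact (mul_eq_zero.mp hdetN).resolve_left hpow
    refine ⟨t₁ / (1 - t₁), t₂ / (1 - t₂), ?_, ?_, ?_, ?_⟩
    · exact div_pos ht₁0 (by linarith)
    · rw [div_lt_div_iff₀ (by linarith) (by linarith)]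
      nlinarith
    · exact key t₁ ht₁0 (by linarith) (hsub1 ht₁) hst₁
    · exact key t₂ (by linarith) ht₂1 (hsub2 ht₂) hst₂
  · -- two roots implies separated
    rintro ⟨l₁, l₂, hl₁, hl₁₂, he₁, he₂⟩ ⟨x₀, hx₀A, hx₀B⟩
    have hfacts : ∀ l : ℝ, 0 < l → (pencilPoly A B).eval l = 0 →
        ellipsoidQuadForm A x₀ ≤ 0 → ellipsoidQuadForm B x₀ ≤ 0 →
        ellipsoidQuadForm A x₀ = 0 ∧ x₀ = cen (l • A + B) := by
      intro l hl he hxA hxB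
      have hMsym : (l • A + B).IsSymm := by
        have := (hAs.smul l).add (hBs.smul (1:ℝ))
        rwa [one_smul] at this
      have hMblk : blk (l • A + B) = l • blk A + blk B := by
        have := blk_combo l 1 A B
        rwa [one_smul, one_smul] at this
      have hMp : (blk (l • A + B)).PosDef := by
        rw [hMblk]
        have := posDef_combo hAp hBp hl.le zero_le_one (by linarith)
        rwa [one_smul] at this
      have hdet0 : (l • A + B).det = 0 := by rw [← pencil_eval]; exact he
      have hschur0 : schur (l • A + B) = 0 := by
        have hfac := det_eq_blk_mul_schur hMsym hMp
        rw [hdet0] at hfac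
        have := hMp.det_pos
        rcases mul_eq_zero.mp hfac.symm with h | h
        · exact absurd h this.ne'
        · exact h
      have hq : ellipsoidQuadForm (l • A + B) x₀ = l * ellipsoidQuadForm A x₀
          + ellipsoidQuadForm B x₀ := by
        have := quadForm_combo l 1 A B x₀
        rwa [one_smul, one_mul] at this
      have hqle : ellipsoidQuadForm (l • A + B) x₀ ≤ 0 := by
        rw [hq]
        have : l * ellipsoidQuadForm A x₀ ≤ 0 := mul_nonpos_of_nonneg_of_nonpos hl.le hxA
        linarith
      have hqge : 0 ≤ ellipsoidQuadForm (l • A + B) x₀ := by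
        rw [← hschur0]
        exact schur_le hMsym hMp x₀
      have hq0 : ellipsoidQuadForm (l • A + B) x₀ = 0 := le_antisymm hqle hqge
      have hxA0 : ellipsoidQuadForm A x₀ = 0 := by
        rw [hq0] at hq
        have h1 : l * ellipsoidQuadForm A x₀ ≤ 0 := mul_nonpos_of_nonneg_of_nonpos hl.le hxA
        have h2 : l * ellipsoidQuadForm A x₀ = 0 := by linarith
        rcases mul_eq_zero.mp h2 with h | h
        · exact absurd h hl.ne'
        · exact h
      refine ⟨hxA0, eq_cen_of_quadForm_eq_schur hMsym hMp ?_⟩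
      rw [hq0, hschur0]
    obtain ⟨hxA0, hcen1⟩ := hfacts l₁ hl₁ he₁ hx₀A hx₀B
    obtain ⟨-, hcen2⟩ := hfacts l₂ (hl₁.trans hl₁₂) he₂ hx₀A hx₀B
    -- derive x₀ = cen A
    have hmv : ∀ l : ℝ, 0 < l → x₀ = cen (l • A + B) →
        l • (blk A *ᵥ x₀) + blk B *ᵥ x₀ = -(l • vec A + vec B) := by
      intro l hl hc
      have hMblk : blk (l • A + B) = l • blk A + blk B := by
        have := blk_combo l 1 A B; rwa [one_smul, one_smul] at this
      have hMvec : vec (l • A + B) = l • vec A + vec B := by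
        have := vec_combo l 1 A B; rwa [one_smul, one_smul] at this
      have hMp : (blk (l • A + B)).PosDef := by
        rw [hMblk]
        have := posDef_combo hAp hBp hl.le zero_le_one (by linarith)
        rwa [one_smul] at this
      have := mulVec_cen hMp
      rw [← hc] at this
      rw [hMblk, hMvec] at this
      rwa [Matrix.add_mulVec, Matrix.smul_mulVec] at this
    have h1 := hmv l₁ hl₁ hcen1
    have h2 := hmv l₂ (hl₁.trans hl₁₂) hcen2
    have hkey : blk A *ᵥ x₀ = -vec A := by
      funext i
      have e1 := congrFun h1 i
      have e2 := congrFun h2 i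
      simp only [Pi.add_apply, Pi.smul_apply, Pi.neg_apply, smul_eq_mul] at e1 e2
      have hne : l₂ - l₁ ≠ 0 := sub_ne_zero.mpr (ne_of_gt hl₁₂)
      have h3 : (l₂ - l₁) * ((blk A *ᵥ x₀) i + vec A i) = 0 := by linear_combination e2 - e1
      rcases mul_eq_zero.mp h3 with h' | h'
      · exact absurd h' hne
      · simp only [Pi.neg_apply]
        linarith
    have hx₀cenA : x₀ = cen A := by
      have hd : IsUnit (blk A).det := hAp.det_pos.ne'.isUnit
      have : (blk A)⁻¹ *ᵥ (blk A *ᵥ x₀) = x₀ := by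
        rw [Matrix.mulVec_mulVec, Matrix.nonsing_inv_mul _ hd, Matrix.one_mulVec]
      rw [hkey] at this
      rw [← this, cen, Matrix.mulVec_neg]
    rw [hx₀cenA, schur_eq_quad_cen hAs hAp] at hxA0
    rw [hxA0] at hsA
    exact lt_irrefl _ hsA

end EllSep

theorem ellipsoids_separated_iff_two_distinct_positive_roots
    (A B : Matrix (Fin 4) (Fin 4) ℝ)
    (hA : IsEllipsoidMatrix A) (hB : IsEllipsoidMatrix B) :
    (¬ ∃ x : Fin 3 → ℝ, ellipsoidQuadForm A x ≤ 0 ∧ ellipsoidQuadForm B x ≤ 0) ↔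
      ∃ lam₁ lam₂ : ℝ, 0 < lam₁ ∧ lam₁ < lam₂ ∧
        (pencilPoly A B).eval lam₁ = 0 ∧ (pencilPoly A B).eval lam₂ = 0 :=
  EllSep.main A B hA hB
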